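/- Let α > 1/2, let P be a set of n points in ℝ³, and suppose some plane π contains exactly α·n points of P. Then P spans at least (1 − α)(2α − 1)n² ordinary lines. -/

import Mathlib

lemma aux_line_eq {L L' : AffineSubspace ℝ (Fin 3 → ℝ)}
    (hL : Module.finrank ℝ L.direction = 1) (hL' : Module.finrank ℝ L'.direction = 1)
    (hle : L ≤ L') {p : Fin 3 → ℝ} (hp : p ∈ L) : L = L' := by
  have hd : L.direction = L'.direction :=
    Submodule.eq_of_le_of_finrank_eq (AffineSubspace.direction_le hle) (by rw [hL, hL'])
  exact AffineSubspace.ext_of_direction_eq hd ⟨p, hp, hle hp⟩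

lemma aux_span_line {x q : Fin 3 → ℝ} (h : x ≠ q) :
    Module.finrank ℝ (affineSpan ℝ ({x, q} : Set (Fin 3 → ℝ))).direction = 1 := by
  rw [direction_affineSpan, vectorSpan_pair]
  exact finrank_span_singleton (by simpa [sub_eq_zero] using h)

lemma aux_meets {π L : AffineSubspace ℝ (Fin 3 → ℝ)}
    (hL : Module.finrank ℝ L.direction = 1) {x q q' : Fin 3 → ℝ}
    (hx : x ∈ L) (hxπ : x ∉ π) (hq : q ∈ L) (hqπ : q ∈ π) (hq' : q' ∈ L) (hq'π : q' ∈ π) :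
    q = q' := by
  by_contra hne
  have h1 : affineSpan ℝ ({q, q'} : Set (Fin 3 → ℝ)) ≤ L := by
    rw [affineSpan_le]
    intro y hy
    rcases hy with rfl | hy
    · exact hq
    · simp only [Set.mem_singleton_iff] at hy; subst hy; exact hq'
  have h2 : affineSpan ℝ ({q, q'} : Set (Fin 3 → ℝ)) = L :=
    aux_line_eq (aux_span_line hne) hL h1
      (subset_affineSpan ℝ _ (by simp : q ∈ ({q, q'} : Set (Fin 3 → ℝ))))
  have h3 : affineSpan ℝ ({q, q'} : Set (Fin 3 → ℝ)) ≤ π := by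
    rw [affineSpan_le]
    intro y hy
    rcases hy with rfl | hy
    · exact hqπ
    · simp only [Set.mem_singleton_iff] at hy; subst hy; exact hq'π
  exact hxπ (h3 (h2 ▸ hx))

/-- A line in `ℝ³`: an affine subspace whose direction has dimension 1. -/
def IsLine3 (L : AffineSubspace ℝ (Fin 3 → ℝ)) : Prop :=
  Module.finrank ℝ L.direction = 1

/-- A plane in `ℝ³`: an affine subspace whose direction has dimension 2. -/
def IsPlane3 (π : AffineSubspace ℝ (Fin 3 → ℝ)) : Prop :=
  Module.finrank ℝ π.direction = 2

/-- The ordinary lines of a point set: lines containing exactly two points of the set. -/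
def ordinaryLines3 (P : Set (Fin 3 → ℝ)) : Set (AffineSubspace ℝ (Fin 3 → ℝ)) :=
  {L | IsLine3 L ∧ (P ∩ ↑L).ncard = 2}

theorem statement12 (α : ℝ) (hα : 1 / 2 < α) (n : ℕ) (P : Finset (Fin 3 → ℝ))
    (hP : P.card = n) (π : AffineSubspace ℝ (Fin 3 → ℝ)) (hπ : IsPlane3 π)
    (hcount : (((↑P : Set (Fin 3 → ℝ)) ∩ ↑π).ncard : ℝ) = α * n) :
    (1 - α) * (2 * α - 1) * n ^ 2 ≤ ((ordinaryLines3 ↑P).ncard : ℝ) := by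
  classical
  subst hP
  set Q : Finset (Fin 3 → ℝ) := P.filter (fun y => y ∈ π) with hQdef
  set R : Finset (Fin 3 → ℝ) := P.filter (fun y => y ∉ π) with hRdef
  set k := Q.card with hk
  set m := R.card with hm
  have hQmem : ∀ y, y ∈ Q ↔ y ∈ P ∧ y ∈ π := fun y => by simp [hQdef, Finset.mem_filter]
  have hRmem : ∀ y, y ∈ R ↔ y ∈ P ∧ y ∉ π := fun y => by simp [hRdef, Finset.mem_filter]
  have hsplit : k + m = P.card := Finset.card_filter_add_card_filter_not _
  have hQset : ((↑P : Set (Fin 3 → ℝ)) ∩ ↑π) = ↑Q := by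
    ext y; simp [hQmem y, and_comm]
  rw [hQset, Set.ncard_coe_finset] at hcount
  -- good pairs
  set good : (Fin 3 → ℝ) → (Fin 3 → ℝ) → Prop :=
    fun x q => ∀ y ∈ P, y ∈ affineSpan ℝ ({x, q} : Set (Fin 3 → ℝ)) → y = x ∨ y = q
    with hgood
  set GP : Finset ((Fin 3 → ℝ) × (Fin 3 → ℝ)) :=
    (R ×ˢ Q).filter (fun p => good p.1 p.2) with hGP
  set Lns : Finset (AffineSubspace ℝ (Fin 3 → ℝ)) :=
    GP.image (fun p => affineSpan ℝ ({p.1, p.2} : Set (Fin 3 → ℝ))) with hLns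
  have hGPmem : ∀ p ∈ GP, p.1 ∈ R ∧ p.2 ∈ Q ∧ good p.1 p.2 := by
    intro p hp
    simp only [hGP, Finset.mem_filter, Finset.mem_product] at hp
    exact ⟨hp.1.1, hp.1.2, hp.2⟩
  have hne : ∀ x ∈ R, ∀ q ∈ Q, x ≠ q := by
    intro x hx q hq h
    exact ((hRmem x).1 hx).2 (h ▸ ((hQmem q).1 hq).2)
  have hxmem : ∀ x q : Fin 3 → ℝ, x ∈ affineSpan ℝ ({x, q} : Set (Fin 3 → ℝ)) :=
    fun x q => subset_affineSpan ℝ _ (by simp)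
  have hqmem : ∀ x q : Fin 3 → ℝ, q ∈ affineSpan ℝ ({x, q} : Set (Fin 3 → ℝ)) :=
    fun x q => subset_affineSpan ℝ _ (by simp)
  -- Step 1: each good pair gives an ordinary line
  have hstep1 : (↑Lns : Set (AffineSubspace ℝ (Fin 3 → ℝ))) ⊆ ordinaryLines3 ↑P := by
    intro L hL
    simp only [hLns, Finset.coe_image, Set.mem_image, Finset.mem_coe] at hL
    obtain ⟨⟨x, q⟩, hp, rfl⟩ := hL
    obtain ⟨hxR, hqQ, hg⟩ := hGPmem _ hp
    have hxq : x ≠ q := hne x hxR q hqQ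
    refine ⟨aux_span_line hxq, ?_⟩
    have hset : (↑P : Set (Fin 3 → ℝ)) ∩ ↑(affineSpan ℝ ({x, q} : Set (Fin 3 → ℝ)))
        = {x, q} := by
      ext y
      constructor
      · rintro ⟨hyP, hyL⟩
        rcases hg y (by simpa using hyP) (by simpa using hyL) with rfl | rfl <;> simp
      · rintro (rfl | rfl)
        · exact ⟨by simpa using ((hRmem y).1 hxR).1, hxmem y q⟩
        · exact ⟨by simpa using ((hQmem y).1 hqQ).1, hqmem x y⟩
    rw [hset]
    exact Set.ncard_pair hxq
  -- Step 2: ordinaryLines3 is finite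
  have hfin : (ordinaryLines3 (↑P : Set (Fin 3 → ℝ))).Finite := by
    apply Set.Finite.subset (Set.Finite.image
      (f := fun p : (Fin 3 → ℝ) × (Fin 3 → ℝ) => affineSpan ℝ ({p.1, p.2} : Set (Fin 3 → ℝ)))
      ((P.finite_toSet).prod P.finite_toSet))
    intro L hL
    obtain ⟨hL1, hL2⟩ := hL
    obtain ⟨a, b, hab, hset⟩ := Set.ncard_eq_two.mp hL2
    have haP : a ∈ (↑P : Set (Fin 3 → ℝ)) := by
      have : a ∈ ({a, b} : Set (Fin 3 → ℝ)) := by simp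
      rw [← hset] at this; exact this.1
    have hbP : b ∈ (↑P : Set (Fin 3 → ℝ)) := by
      have : b ∈ ({a, b} : Set (Fin 3 → ℝ)) := by simp
      rw [← hset] at this; exact this.1
    have haL : a ∈ L := by
      have : a ∈ ({a, b} : Set (Fin 3 → ℝ)) := by simp
      rw [← hset] at this; exact this.2
    have hbL : b ∈ L := by
      have : b ∈ ({a, b} : Set (Fin 3 → ℝ)) := by simp
      rw [← hset] at this; exact this.2
    have hle : affineSpan ℝ ({a, b} : Set (Fin 3 → ℝ)) ≤ L := by
      rw [affineSpan_le]
      intro y hy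
      rcases hy with rfl | hy
      · exact haL
      · simp only [Set.mem_singleton_iff] at hy; subst hy; exact hbL
    have := aux_line_eq (aux_span_line hab) hL1 hle (hxmem a b)
    exact ⟨(a, b), ⟨haP, hbP⟩, this⟩
  -- Step 3: the map to lines is injective on GP
  have hstep3 : Lns.card = GP.card := by
    rw [hLns]
    apply Finset.card_image_of_injOn
    rintro ⟨x, q⟩ hp ⟨x', q'⟩ hp' hL
    have hxR : x ∈ R := (hGPmem _ (by simpa using hp)).1
    have hqQ : q ∈ Q := (hGPmem _ (by simpa using hp)).2.1
    have hg : good x q := (hGPmem _ (by simpa using hp)).2.2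
    have hxR' : x' ∈ R := (hGPmem _ (by simpa using hp')).1
    have hqQ' : q' ∈ Q := (hGPmem _ (by simpa using hp')).2.1
    have hg' : good x' q' := (hGPmem _ (by simpa using hp')).2.2
    simp only at hL
    have hx'L : x' ∈ affineSpan ℝ ({x, q} : Set (Fin 3 → ℝ)) := hL ▸ hxmem x' q'
    have hq'L : q' ∈ affineSpan ℝ ({x, q} : Set (Fin 3 → ℝ)) := hL ▸ hqmem x' q'
    have hx' : x' = x := by
      rcases hg x' ((hRmem x').1 hxR' |>.1) hx'L with h | h
      · exact h
      · exfalso; exact ((hRmem x').1 hxR').2 (by rw [h]; exact ((hQmem q).1 hqQ).2)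
    have hq' : q' = q := by
      rcases hg q' ((hQmem q').1 hqQ' |>.1) hq'L with h | h
      · exfalso; exact ((hRmem x).1 hxR).2 (by rw [← h]; exact ((hQmem q').1 hqQ').2)
      · exact h
    simp [hx', hq']
  -- Step 4: fiberwise count
  have hstep4 : GP.card = ∑ x ∈ R, (Q.filter (fun q => good x q)).card := by
    rw [Finset.card_eq_sum_card_fiberwise (f := Prod.fst) (t := R)
      (fun p hp => (hGPmem p hp).1)]
    apply Finset.sum_congr rfl
    intro x hxR
    apply Finset.card_bij (fun p _ => p.2)
    · intro p hp
      simp only [Finset.mem_filter] at hp ⊢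
      obtain ⟨hgp, h1⟩ := hp
      obtain ⟨_, h2, h3⟩ := hGPmem _ hgp
      exact ⟨h2, h1 ▸ h3⟩
    · rintro ⟨a, b⟩ ha ⟨c, d⟩ hc h
      simp only [Finset.mem_filter] at ha hc
      simp only at h
      rw [Prod.ext_iff]
      exact ⟨ha.2.trans hc.2.symm, h⟩
    · intro q hq
      simp only [Finset.mem_filter] at hq
      exact ⟨(x, q), Finset.mem_filter.mpr ⟨Finset.mem_filter.mpr
        ⟨Finset.mem_product.mpr ⟨hxR, hq.1⟩, hq.2⟩, rfl⟩, rfl⟩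
  -- Step 5: per-point lower bound
  have hstep5 : ∀ x ∈ R, k - (m - 1) ≤ (Q.filter (fun q => good x q)).card := by
    intro x hxR
    obtain ⟨hxP, hxπ⟩ := (hRmem x).1 hxR
    have hsplit2 : (Q.filter (fun q => good x q)).card
        + (Q.filter (fun q => ¬ good x q)).card = k :=
      Finset.card_filter_add_card_filter_not _
    have hbad : (Q.filter (fun q => ¬ good x q)).card ≤ m - 1 := by
      have : (Q.filter (fun q => ¬ good x q)).card ≤ (R.erase x).card := by
        apply Finset.card_le_card_of_injOn
          (fun q => if h : ∃ y, y ∈ P ∧ y ∈ affineSpan ℝ ({x, q} : Set (Fin 3 → ℝ))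
              ∧ y ≠ x ∧ y ≠ q then h.choose else x)
        · intro q hq
          simp only [Finset.coe_filter, Set.mem_setOf_eq] at hq
          obtain ⟨hqQ, hng⟩ := hq
          obtain ⟨hqP, hqπ⟩ := (hQmem q).1 hqQ
          have hex : ∃ y, y ∈ P ∧ y ∈ affineSpan ℝ ({x, q} : Set (Fin 3 → ℝ))
              ∧ y ≠ x ∧ y ≠ q := by
            simp only [hgood] at hng
            push_neg at hng
            obtain ⟨y, hy1, hy2, hy3⟩ := hng
            exact ⟨y, hy1, hy2, hy3⟩
          simp only [dif_pos hex]
          obtain ⟨hyP, hyL, hyx, hyq⟩ := hex.choose_spec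
          set y := hex.choose
          have hxq : x ≠ q := fun h => hxπ (h ▸ hqπ)
          have hyπ : y ∉ π := by
            intro hyπ
            exact hyq (aux_meets (aux_span_line hxq) (hxmem x q) hxπ hyL hyπ (hqmem x q) hqπ)
          rw [Finset.mem_coe, Finset.mem_erase]
          exact ⟨hyx, (hRmem y).2 ⟨hyP, hyπ⟩⟩
        · intro q hq q' hq' heq
          simp only [Finset.coe_filter, Set.mem_setOf_eq] at hq hq'
          obtain ⟨hqQ, hng⟩ := hq
          obtain ⟨hqQ', hng'⟩ := hq'
          obtain ⟨hqP, hqπ⟩ := (hQmem q).1 hqQ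
          obtain ⟨hqP', hqπ'⟩ := (hQmem q').1 hqQ'
          have hxq : x ≠ q := fun h => hxπ (h ▸ hqπ)
          have hxq' : x ≠ q' := fun h => hxπ (h ▸ hqπ')
          have hex : ∃ y, y ∈ P ∧ y ∈ affineSpan ℝ ({x, q} : Set (Fin 3 → ℝ))
              ∧ y ≠ x ∧ y ≠ q := by
            simp only [hgood] at hng; push_neg at hng
            obtain ⟨y, hy1, hy2, hy3⟩ := hng; exact ⟨y, hy1, hy2, hy3⟩
          have hex' : ∃ y, y ∈ P ∧ y ∈ affineSpan ℝ ({x, q'} : Set (Fin 3 → ℝ))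
              ∧ y ≠ x ∧ y ≠ q' := by
            simp only [hgood] at hng'; push_neg at hng'
            obtain ⟨y, hy1, hy2, hy3⟩ := hng'; exact ⟨y, hy1, hy2, hy3⟩
          simp only [dif_pos hex, dif_pos hex'] at heq
          obtain ⟨_, hyL, hyx, _⟩ := hex.choose_spec
          obtain ⟨_, hyL', hyx', _⟩ := hex'.choose_spec
          set y := hex.choose
          have hyL2 : y ∈ affineSpan ℝ ({x, q'} : Set (Fin 3 → ℝ)) := by
            rw [heq]; exact hyL'
          -- line x y equals both lines
          have hkey : ∀ (q0 : Fin 3 → ℝ), x ≠ q0 →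
              y ∈ affineSpan ℝ ({x, q0} : Set (Fin 3 → ℝ)) →
              affineSpan ℝ ({x, y} : Set (Fin 3 → ℝ))
                = affineSpan ℝ ({x, q0} : Set (Fin 3 → ℝ)) := by
            intro q0 hxq0 hy0
            apply aux_line_eq (aux_span_line (Ne.symm hyx)) (aux_span_line hxq0)
            · rw [affineSpan_le]
              intro z hz
              rcases hz with h | h
              · rw [h]; exact hxmem x q0
              · simp only [Set.mem_singleton_iff] at h; rw [h]; exact hy0
            · exact hxmem x y
          have hL1 := hkey q hxq hyL
          have hL2 := hkey q' hxq' hyL2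
          have hLL : affineSpan ℝ ({x, q} : Set (Fin 3 → ℝ))
              = affineSpan ℝ ({x, q'} : Set (Fin 3 → ℝ)) := hL1.symm.trans hL2
          exact aux_meets (aux_span_line hxq) (hxmem x q) hxπ (hqmem x q) hqπ
            (by rw [hLL]; exact hqmem x q') hqπ'
      calc (Q.filter (fun q => ¬ good x q)).card ≤ (R.erase x).card := this
        _ = m - 1 := by rw [Finset.card_erase_of_mem hxR]
    omega
  -- Combine: Lns.card ≥ m * (k - (m-1))
  have hsum : m * (k - (m - 1)) ≤ Lns.card := by
    rw [hstep3, hstep4]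
    calc m * (k - (m - 1)) = ∑ _x ∈ R, (k - (m - 1)) := by rw [Finset.sum_const, smul_eq_mul]
      _ ≤ ∑ x ∈ R, (Q.filter (fun q => good x q)).card := Finset.sum_le_sum hstep5
  have hcard : (Lns.card : ℝ) ≤ ((ordinaryLines3 (↑P : Set (Fin 3 → ℝ))).ncard : ℝ) := by
    have := Set.ncard_le_ncard hstep1 hfin
    rw [Set.ncard_coe_finset] at this
    exact_mod_cast this
  -- Final arithmetic
  have hmn : (k : ℝ) + (m : ℝ) = (P.card : ℝ) := by exact_mod_cast hsplit
  have hkR : (k : ℝ) = α * P.card := hcount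
  have hfinal : (1 - α) * (2 * α - 1) * (P.card : ℝ) ^ 2 ≤ ((m * (k - (m - 1)) : ℕ) : ℝ) := by
    have hmR : (m : ℝ) = (1 - α) * (P.card : ℝ) := by linarith
    have htgt : (1 - α) * (2 * α - 1) * (P.card : ℝ) ^ 2 = (m : ℝ) * ((k : ℝ) - (m : ℝ)) := by
      rw [hmR, hkR]; ring
    rw [htgt]
    rcases Nat.eq_zero_or_pos m with hm0 | hm1
    · simp [hm0]
    rcases le_or_gt m k with hmk | hkm
    · have h1 : m - 1 ≤ k := by omega
      rw [Nat.cast_mul, Nat.cast_sub h1, Nat.cast_sub (by omega : 1 ≤ m)]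
      push_cast
      have hmpos : (0 : ℝ) < (m : ℝ) := by exact_mod_cast hm1
      nlinarith [hmpos]
    · have h1 : (k : ℝ) < (m : ℝ) := by exact_mod_cast hkm
      have h2 : (0 : ℝ) ≤ ((m * (k - (m - 1)) : ℕ) : ℝ) := Nat.cast_nonneg _
      have hmnn : (0 : ℝ) ≤ (m : ℝ) := by positivity
      nlinarith [hmnn]
  calc (1 - α) * (2 * α - 1) * (P.card : ℝ) ^ 2 ≤ ((m * (k - (m - 1)) : ℕ) : ℝ) := hfinal
    _ ≤ (Lns.card : ℝ) := by exact_mod_cast hsum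
    _ ≤ _ := hcard
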